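/- Let f : {a}* → {a,b}* be the function defined by f(a^{2n}) = (ab)ⁿ and f(a^{2n+1}) = (ab)ⁿ·a·(ab)ⁿ. Then f is not A-continuous: there exists a language L ⊆ {a,b}* recognized by a finite aperiodic monoid such that the preimage f⁻¹(L) is not recognized by any finite aperiodic monoid. -/

import Mathlib

/-- The two-letter alphabet `{a, b}`. -/
inductive AB : Type
  | a : AB
  | b : AB
deriving DecidableEq

/-- `wpow x k` is the `k`-fold concatenation `xᵏ` of the word `x`. -/
def wpow {A : Type*} (x : List A) : ℕ → List A
  | 0 => []
  | n + 1 => x ++ wpow x n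

/-- The function `f(a^{2n}) = (ab)ⁿ` and `f(a^{2n+1}) = (ab)ⁿ·a·(ab)ⁿ`. -/
def fMid (w : List Unit) : List AB :=
  if w.length % 2 = 0 then wpow [AB.a, AB.b] (w.length / 2)
  else wpow [AB.a, AB.b] (w.length / 2) ++ [AB.a] ++ wpow [AB.a, AB.b] (w.length / 2)

/-- A monoid is aperiodic if every element `x` satisfies `x^{n+1} = xⁿ` for
some `n`. -/
def IsAperiodic (M : Type) [Monoid M] : Prop :=
  ∀ x : M, ∃ n : ℕ, x ^ (n + 1) = x ^ n

/-- `L` is recognized by a finite aperiodic monoid. -/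
def RecogByFinAperiodicMonoid {A : Type} (L : Set (List A)) : Prop :=
  ∃ (M : Type) (_ : Fintype M) (_ : Monoid M), IsAperiodic M ∧
    ∃ (φ : FreeMonoid A →* M) (S : Set M),
      L = {w : List A | φ (FreeMonoid.ofList w) ∈ S}

/-! ### A concrete aperiodic monoid

`MT = Option (Bool × Bool × Bool)`, where `some (f, l, c)` records, for a
nonempty word over `{a,b}`: does it start with `a`, does it end with `a`,
does it contain the factor `aa`. `none` is the identity (empty word). -/

abbrev MT : Type := Option (Bool × Bool × Bool)

def mtMul : MT → MT → MT
  | none, y => y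
  | x, none => x
  | some x, some y => some (x.1, y.2.1, x.2.2 || y.2.2 || (x.2.1 && y.1))

instance : Monoid MT where
  mul := mtMul
  one := none
  one_mul x := by cases x <;> rfl
  mul_one x := by cases x <;> rfl
  mul_assoc := by decide

lemma mt_aperiodic : IsAperiodic MT := fun x => ⟨2, by revert x; decide⟩

/-- The homomorphism sending `a ↦ some (true, true, false)` and
`b ↦ some (false, false, false)`. -/
def φ₀ : FreeMonoid AB →* MT :=
  FreeMonoid.lift (fun x => match x with
    | AB.a => some (true, true, false)
    | AB.b => some (false, false, false))

lemma φ₀_ab : φ₀ (FreeMonoid.ofList [AB.a, AB.b]) = some (true, false, false) := by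
  rfl

lemma φ₀_wpow (n : ℕ) :
    φ₀ (FreeMonoid.ofList (wpow [AB.a, AB.b] n)) =
      if n = 0 then 1 else some (true, false, false) := by
  induction n with
  | zero => rfl
  | succ k ih =>
    show φ₀ (FreeMonoid.ofList ([AB.a, AB.b] ++ wpow [AB.a, AB.b] k)) = _
    rw [FreeMonoid.ofList_append, map_mul, ih, φ₀_ab]
    rcases Nat.eq_zero_or_pos k with hk | hk
    · simp [hk]
    · simp [Nat.pos_iff_ne_zero.mp hk]; rfl

def S₀ : Set MT := {m | ∃ f l c, m = some (f, l, c) ∧ (l = true ∨ c = true)}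

lemma mt_one_eq : (1 : MT) = none := rfl

lemma not_mem_S₀ (n : ℕ) :
    (if n = 0 then (1 : MT) else some (true, false, false)) ∉ S₀ := by
  rintro ⟨f, l, c, heq, hlc⟩
  split at heq
  · rw [mt_one_eq] at heq; exact Option.some_ne_none _ heq.symm
  · simp only [Option.some.injEq, Prod.mk.injEq] at heq
    obtain ⟨h1, h2, h3⟩ := heq
    rcases hlc with h4 | h4 <;> simp_all

lemma key (w : List Unit) :
    φ₀ (FreeMonoid.ofList (fMid w)) ∈ S₀ ↔ w.length % 2 = 1 := by
  unfold fMid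
  rcases Nat.mod_two_eq_zero_or_one w.length with h | h
  · rw [if_pos h, φ₀_wpow, h]
    refine iff_of_false (not_mem_S₀ _) (by omega)
  · rw [if_neg (by omega), h]
    refine iff_of_true ?_ rfl
    rw [FreeMonoid.ofList_append, FreeMonoid.ofList_append, map_mul, map_mul, φ₀_wpow]
    have ha : φ₀ (FreeMonoid.ofList [AB.a]) = some (true, true, false) := rfl
    rw [ha]
    rcases Nat.eq_zero_or_pos (w.length / 2) with hk | hk
    · rw [if_pos hk, one_mul, mul_one]
      exact ⟨true, true, false, rfl, Or.inl rfl⟩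
    · rw [if_neg (Nat.pos_iff_ne_zero.mp hk)]
      exact ⟨true, false, true, rfl, Or.inr rfl⟩

lemma pow_stab {M : Type} [Monoid M] {x : M} {n : ℕ} (hx : x ^ (n + 1) = x ^ n) :
    ∀ k, x ^ (n + k) = x ^ n := by
  intro k
  induction k with
  | zero => rfl
  | succ m ih =>
    calc x ^ (n + (m + 1)) = x ^ (n + m) * x := by rw [← add_assoc, pow_succ]
    _ = x ^ n * x := by rw [ih]
    _ = x ^ (n + 1) := by rw [pow_succ]
    _ = x ^ n := hx

lemma phi_replicate {M : Type} [Monoid M] (ψ : FreeMonoid Unit →* M) (k : ℕ) :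
    ψ (FreeMonoid.ofList (List.replicate k ())) = (ψ (FreeMonoid.ofList [()])) ^ k := by
  induction k with
  | zero => simp [FreeMonoid.ofList_nil]
  | succ m ih =>
    rw [List.replicate_succ, FreeMonoid.ofList_cons, map_mul, pow_succ', ih]
    rfl

/-- `fMid` is not A-continuous: some language recognized by a finite aperiodic
monoid has a preimage that is not recognized by any finite aperiodic monoid. -/
theorem fMid_not_a_continuous :
    ∃ L : Set (List AB), RecogByFinAperiodicMonoid L ∧
      ¬ RecogByFinAperiodicMonoid (fMid ⁻¹' L) := by
  refine ⟨{w : List AB | φ₀ (FreeMonoid.ofList w) ∈ S₀}, ⟨MT, inferInstance, inferInstance,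
    mt_aperiodic, φ₀, S₀, rfl⟩, ?_⟩
  rintro ⟨M, fM, mM, hap, ψ, S, hS⟩
  have hmem : ∀ w : List Unit,
      (ψ (FreeMonoid.ofList w) ∈ S) ↔ w.length % 2 = 1 := by
    intro w
    have h1 : w ∈ fMid ⁻¹' {w : List AB | φ₀ (FreeMonoid.ofList w) ∈ S₀} ↔
        ψ (FreeMonoid.ofList w) ∈ S := by rw [hS]; rfl
    rw [← h1]
    exact key w
  obtain ⟨n, hx⟩ := hap (ψ (FreeMonoid.ofList [()]))
  have h2n := hmem (List.replicate (2 * n) ())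
  have h2n1 := hmem (List.replicate (2 * n + 1) ())
  rw [phi_replicate] at h2n h2n1
  have e1 : (ψ (FreeMonoid.ofList [()])) ^ (2 * n) = (ψ (FreeMonoid.ofList [()])) ^ n := by
    have := pow_stab hx n; rwa [two_mul]
  have e2 : (ψ (FreeMonoid.ofList [()])) ^ (2 * n + 1) = (ψ (FreeMonoid.ofList [()])) ^ n := by
    have := pow_stab hx (n + 1)
    rwa [two_mul, add_assoc]
  rw [e1, List.length_replicate] at h2n
  rw [e2, List.length_replicate] at h2n1
  have hodd : (2 * n + 1) % 2 = 1 := by omega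
  have heven : ¬ (2 * n) % 2 = 1 := by omega
  exact heven (h2n.mp (h2n1.mpr hodd))
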